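/- Let A, B, C, D be four affinely independent points in Euclidean 3-space such that the four triangles ABC, ABD, ACD, BCD all have the same area. Then every two of these four triangles are congruent: for any two of the triples {A,B,C}, {A,B,D}, {A,C,D}, {B,C,D} there is an isometry of ℝ³ mapping the vertex set of one onto the vertex set of the other. -/

import Mathlib

open RealInnerProductSpace

/-- The area of the triangle `XYZ`: half the product of the lengths of the
sides `XY`, `XZ` and the sine of the angle at `X`. -/
noncomputable def triArea (X Y Z : EuclideanSpace ℝ (Fin 3)) : ℝ :=
  dist X Y * dist X Z * Real.sin (EuclideanGeometry.angle Y X Z) / 2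

/-- Two triangles (given as vertex sets) are congruent if some isometry of the
space maps the vertex set of one onto the vertex set of the other. -/
def TriCongruent (s t : Set (EuclideanSpace ℝ (Fin 3))) : Prop :=
  ∃ f : EuclideanSpace ℝ (Fin 3) ≃ᵢ EuclideanSpace ℝ (Fin 3), f '' s = t

lemma area_sq (X Y Z : EuclideanSpace ℝ (Fin 3)) :
    (2 * triArea X Y Z)^2 =
      ⟪Y - X, Y - X⟫ * ⟪Z - X, Z - X⟫ - ⟪Y - X, Z - X⟫^2 := by
  have h := InnerProductGeometry.sin_angle_mul_norm_mul_norm (Y - X) (Z - X)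
  have hnn : (0:ℝ) ≤ ⟪Y - X, Y - X⟫ * ⟪Z - X, Z - X⟫ - ⟪Y - X, Z - X⟫ * ⟪Y - X, Z - X⟫ := by
    have := real_inner_mul_inner_self_le (Y - X) (Z - X)
    linarith
  have h2 : (2 * triArea X Y Z) = Real.sin (InnerProductGeometry.angle (Y - X) (Z - X)) * (‖Y - X‖ * ‖Z - X‖) := by
    unfold triArea
    rw [EuclideanGeometry.angle, dist_eq_norm, dist_eq_norm, norm_sub_rev X Y, norm_sub_rev X Z]
    simp only [vsub_eq_sub]
    ring
  rw [h2, h, Real.sq_sqrt hnn]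
  ring

lemma polar (X Y Z : EuclideanSpace ℝ (Fin 3)) :
    ⟪Y - X, Z - X⟫ = (dist X Y^2 + dist X Z^2 - dist Y Z^2)/2 := by
  have h := @norm_sub_sq_real (EuclideanSpace ℝ (Fin 3)) _ _ (Y - X) (Z - X)
  have he : (Y - X) - (Z - X) = Y - Z := by abel
  rw [he] at h
  rw [dist_eq_norm, dist_eq_norm, dist_eq_norm, norm_sub_rev X Y, norm_sub_rev X Z]
  linarith

lemma strictCS (x y : EuclideanSpace ℝ (Fin 3))
    (h : ∀ c d : ℝ, c • x + d • y = 0 → c = 0 ∧ d = 0) :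
    ⟪x, y⟫^2 < ⟪x, x⟫ * ⟪y, y⟫ := by
  have hx : x ≠ 0 := by
    intro hx
    have := (h 1 0 (by simp [hx])).1
    norm_num at this
  have hy : y ≠ 0 := by
    intro hy
    have := (h 0 1 (by simp [hy])).2
    norm_num at this
  have hnx : (0:ℝ) < ‖x‖ := norm_pos_iff.mpr hx
  have hny : (0:ℝ) < ‖y‖ := norm_pos_iff.mpr hy
  have hle := real_inner_mul_inner_self_le x y
  rcases lt_or_eq_of_le hle with hlt | heq
  · nlinarith [hlt]
  · exfalso
    have h1 : ⟪x, x⟫ = ‖x‖^2 := real_inner_self_eq_norm_sq x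
    have h2 : ⟪y, y⟫ = ‖y‖^2 := real_inner_self_eq_norm_sq y
    have hsq : ⟪x, y⟫^2 = (‖x‖*‖y‖)^2 := by rw [sq]; rw [heq, h1, h2]; ring
    have habs : ⟪x, y⟫ = ‖x‖*‖y‖ ∨ ⟪x, y⟫ = -(‖x‖*‖y‖) := sq_eq_sq_iff_eq_or_eq_neg.mp hsq
    rcases habs with hh | hh
    · have hd := inner_eq_norm_mul_iff_real.mp hh
      have := (h ‖y‖ (-‖x‖) (by rw [neg_smul, hd]; abel)).1
      linarith
    · have hh' : ⟪x, -y⟫ = ‖x‖ * ‖(-y : EuclideanSpace ℝ (Fin 3))‖ := by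
        rw [inner_neg_right, norm_neg, hh]; ring
      have hd := inner_eq_norm_mul_iff_real.mp hh'
      rw [norm_neg, smul_neg] at hd
      have := (h ‖y‖ ‖x‖ (by rw [hd]; abel)).1
      linarith

lemma scalar_key (P Q R s t m : ℝ) (hP : 0 < P) (hQ : 0 < Q) (hR : 0 < R)
    (cs1 : s^2 < Q*R) (cs2 : t^2 < R*P) (cs3 : m^2 < P*Q)
    (e1 : s*t = m*R) (e2 : m*s = Q*t) (e3 : t*m = s*P) :
    s = 0 ∧ t = 0 ∧ m = 0 := by
  have hs : s = 0 := by
    by_contra hs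
    have ht : t ≠ 0 := by
      intro ht
      have hm : m = 0 := by
        have h0 : m * R = 0 := by rw [← e1, ht, mul_zero]
        exact (mul_eq_zero.mp h0).resolve_right (ne_of_gt hR)
      apply hs
      have h0 : s * P = 0 := by rw [← e3, ht, hm, mul_zero]
      exact (mul_eq_zero.mp h0).resolve_right (ne_of_gt hP)
    have hm : m ≠ 0 := by
      intro hm
      apply ht
      have h0 : Q * t = 0 := by rw [← e2, hm, zero_mul]
      exact (mul_eq_zero.mp h0).resolve_left (ne_of_gt hQ)
    have key : s*t*m = P*Q*R := by
      have h4 : (s*t*m) * (s*t*m) = (s*t*m) * (P*Q*R) := by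
        calc (s*t*m) * (s*t*m) = (s*t)*(m*s)*(t*m) := by ring
        _ = (m*R)*(Q*t)*(s*P) := by rw [e1, e2, e3]
        _ = (s*t*m) * (P*Q*R) := by ring
      exact mul_left_cancel₀ (by positivity) h4
    have st2 : s^2*t^2 < (Q*R)*(R*P) := mul_lt_mul'' cs1 cs2 (sq_nonneg s) (sq_nonneg t)
    have stm2 : (s^2*t^2)*m^2 < ((Q*R)*(R*P))*(P*Q) :=
      mul_lt_mul'' st2 cs3 (by positivity) (sq_nonneg m)
    have hc : s^2*t^2*m^2 = Q*R*(R*P)*(P*Q) := by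
      linear_combination (s*t*m + P*Q*R) * key
    linarith [stm2, hc]
  refine ⟨hs, ?_, ?_⟩
  · have h0 : Q * t = 0 := by rw [← e2, hs, mul_zero]
    exact (mul_eq_zero.mp h0).resolve_left (ne_of_gt hQ)
  · have h0 : m * R = 0 := by rw [← e1, hs, zero_mul]
    exact (mul_eq_zero.mp h0).resolve_right (ne_of_gt hR)

lemma main_dist (A B C D : EuclideanSpace ℝ (Fin 3))
    (hind : AffineIndependent ℝ ![A, B, C, D])
    (h1 : triArea A B C = triArea A B D)
    (h2 : triArea A B C = triArea A C D)
    (h3 : triArea A B C = triArea B C D) :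
    dist A B = dist C D ∧ dist A C = dist B D ∧ dist A D = dist B C := by
  set a := B - A with ha
  set b := C - A with hb
  set c := D - A with hc
  have H : ∀ x y z : ℝ, x • a + y • b + z • c = 0 → x = 0 ∧ y = 0 ∧ z = 0 := by
    intro x y z hxyz
    have hsum : ∑ i, (![-(x+y+z), x, y, z]) i = 0 := by
      simp [Fin.sum_univ_four]; ring
    have hpt : ∑ i, (![-(x+y+z), x, y, z]) i • (![A, B, C, D]) i = 0 := by
      rw [Fin.sum_univ_four]
      simp only [Matrix.cons_val_zero, Matrix.cons_val_one, Matrix.head_cons,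
        Matrix.cons_val_two, Matrix.tail_cons, Matrix.cons_val_three]
      have he : -(x+y+z) • A + x • B + y • C + z • D
          = x • (B - A) + y • (C - A) + z • (D - A) := by module
      rw [he, ← ha, ← hb, ← hc, hxyz]
    have h0 := hind.eq_zero_of_sum_eq_zero hsum hpt
    refine ⟨?_, ?_, ?_⟩
    · simpa using h0 1 (Finset.mem_univ _)
    · simpa using h0 2 (Finset.mem_univ _)
    · simpa using h0 3 (Finset.mem_univ _)
  set p := (2⁻¹ : ℝ) • (b + c - a) with hp
  set q := (2⁻¹ : ℝ) • (c + a - b) with hq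
  set r := (2⁻¹ : ℝ) • (a + b - c) with hr
  have Hqr : ∀ x y : ℝ, x • q + y • r = 0 → x = 0 ∧ y = 0 := by
    intro x y hxy
    have he : ((x+y)/2) • a + ((y-x)/2) • b + ((x-y)/2) • c = x • q + y • r := by
      rw [hq, hr]; module
    obtain ⟨e1, e2, e3⟩ := H _ _ _ (he.trans hxy)
    constructor <;> linarith
  have Hrp : ∀ x y : ℝ, x • r + y • p = 0 → x = 0 ∧ y = 0 := by
    intro x y hxy
    have he : ((x-y)/2) • a + ((x+y)/2) • b + ((y-x)/2) • c = x • r + y • p := by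
      rw [hr, hp]; module
    obtain ⟨e1, e2, e3⟩ := H _ _ _ (he.trans hxy)
    constructor <;> linarith
  have Hpq : ∀ x y : ℝ, x • p + y • q = 0 → x = 0 ∧ y = 0 := by
    intro x y hxy
    have he : ((y-x)/2) • a + ((x-y)/2) • b + ((x+y)/2) • c = x • p + y • q := by
      rw [hp, hq]; module
    obtain ⟨e1, e2, e3⟩ := H _ _ _ (he.trans hxy)
    constructor <;> linarith
  have hp0 : p ≠ 0 := by
    intro h0
    have := (Hpq 1 0 (by rw [h0]; simp)).1
    norm_num at this
  have hq0 : q ≠ 0 := by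
    intro h0
    have := (Hpq 0 1 (by rw [h0]; simp)).2
    norm_num at this
  have hr0 : r ≠ 0 := by
    intro h0
    have := (Hrp 1 0 (by rw [h0]; simp)).1
    norm_num at this
  have inpos : ∀ x : EuclideanSpace ℝ (Fin 3), x ≠ 0 → 0 < ⟪x, x⟫ := by
    intro x hx
    rw [real_inner_self_eq_norm_sq]
    exact pow_pos (norm_pos_iff.mpr hx) 2
  have hPpos : 0 < ⟪p, p⟫ := inpos p hp0
  have hQpos : 0 < ⟪q, q⟫ := inpos q hq0
  have hRpos : 0 < ⟪r, r⟫ := inpos r hr0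
  have cs1 := strictCS q r Hqr
  have cs2 := strictCS r p Hrp
  have cs3 := strictCS p q Hpq
  -- hypotheses in Gram form
  have e1 := area_sq A B C
  have e2 := area_sq A B D
  have e3 := area_sq A C D
  have e4 := area_sq B C D
  rw [← ha, ← hb] at e1
  rw [← ha, ← hc] at e2
  rw [← hb, ← hc] at e3
  have hCB : C - B = b - a := by rw [hb, ha]; abel
  have hDB : D - B = c - a := by rw [hc, ha]; abel
  rw [hCB, hDB] at e4
  have H1 : ⟪a,a⟫*⟪b,b⟫ - ⟪a,b⟫^2 = ⟪a,a⟫*⟪c,c⟫ - ⟪a,c⟫^2 := by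
    rw [← e1, ← e2, h1]
  have H2 : ⟪a,a⟫*⟪b,b⟫ - ⟪a,b⟫^2 = ⟪b,b⟫*⟪c,c⟫ - ⟪b,c⟫^2 := by
    rw [← e1, ← e3, h2]
  have H3 : ⟪a,a⟫*⟪b,b⟫ - ⟪a,b⟫^2
      = (⟪b,b⟫ - 2*⟪a,b⟫ + ⟪a,a⟫)*(⟪c,c⟫ - ⟪a,c⟫ - ⟪a,c⟫ + ⟪a,a⟫)
        - (⟪b,c⟫ - ⟪a,c⟫ - ⟪a,b⟫ + ⟪a,a⟫)^2 := by
    rw [← h3] at e4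
    rw [e1] at e4
    rw [e4]
    simp only [inner_sub_left, inner_sub_right]
    simp only [real_inner_comm b a, real_inner_comm c a, real_inner_comm c b]
    ring
  -- expansions
  have Eqr : ⟪q,r⟫ = (⟪a,a⟫ + 2*⟪b,c⟫ - ⟪b,b⟫ - ⟪c,c⟫)/4 := by
    rw [hq, hr]
    simp only [real_inner_smul_left, real_inner_smul_right, inner_add_left, inner_add_right,
      inner_sub_left, inner_sub_right]
    simp only [real_inner_comm b a, real_inner_comm c a, real_inner_comm c b]
    ring
  have Erp : ⟪r,p⟫ = (⟪b,b⟫ + 2*⟪a,c⟫ - ⟪a,a⟫ - ⟪c,c⟫)/4 := by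
    rw [hr, hp]
    simp only [real_inner_smul_left, real_inner_smul_right, inner_add_left, inner_add_right,
      inner_sub_left, inner_sub_right]
    simp only [real_inner_comm b a, real_inner_comm c a, real_inner_comm c b]
    ring
  have Epq : ⟪p,q⟫ = (⟪c,c⟫ + 2*⟪a,b⟫ - ⟪a,a⟫ - ⟪b,b⟫)/4 := by
    rw [hp, hq]
    simp only [real_inner_smul_left, real_inner_smul_right, inner_add_left, inner_add_right,
      inner_sub_left, inner_sub_right]
    simp only [real_inner_comm b a, real_inner_comm c a, real_inner_comm c b]
    ring
  have Epp : ⟪p,p⟫ = (⟪a,a⟫ + ⟪b,b⟫ + ⟪c,c⟫ + 2*⟪b,c⟫ - 2*⟪a,b⟫ - 2*⟪a,c⟫)/4 := by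
    rw [hp]
    simp only [real_inner_smul_left, real_inner_smul_right, inner_add_left, inner_add_right,
      inner_sub_left, inner_sub_right]
    simp only [real_inner_comm b a, real_inner_comm c a, real_inner_comm c b]
    ring
  have Eqq : ⟪q,q⟫ = (⟪a,a⟫ + ⟪b,b⟫ + ⟪c,c⟫ + 2*⟪a,c⟫ - 2*⟪a,b⟫ - 2*⟪b,c⟫)/4 := by
    rw [hq]
    simp only [real_inner_smul_left, real_inner_smul_right, inner_add_left, inner_add_right,
      inner_sub_left, inner_sub_right]
    simp only [real_inner_comm b a, real_inner_comm c a, real_inner_comm c b]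
    ring
  have Err : ⟪r,r⟫ = (⟪a,a⟫ + ⟪b,b⟫ + ⟪c,c⟫ + 2*⟪a,b⟫ - 2*⟪a,c⟫ - 2*⟪b,c⟫)/4 := by
    rw [hr]
    simp only [real_inner_smul_left, real_inner_smul_right, inner_add_left, inner_add_right,
      inner_sub_left, inner_sub_right]
    simp only [real_inner_comm b a, real_inner_comm c a, real_inner_comm c b]
    ring
  have eXY : ⟪q,r⟫*⟪r,p⟫ = ⟪p,q⟫*⟪r,r⟫ := by
    rw [Eqr, Erp, Epq, Err]
    linear_combination (H1 + H2 - H3)/8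
  have eXZ : ⟪p,q⟫*⟪q,r⟫ = ⟪q,q⟫*⟪r,p⟫ := by
    rw [Eqr, Epq, Eqq, Erp]
    linear_combination (-H1 + H2 - H3)/8
  have eYZ : ⟪r,p⟫*⟪p,q⟫ = ⟪q,r⟫*⟪p,p⟫ := by
    rw [Erp, Epq, Eqr, Epp]
    linear_combination (H1 - H2 - H3)/8
  obtain ⟨hs, ht, hm⟩ := scalar_key ⟪p,p⟫ ⟪q,q⟫ ⟪r,r⟫ ⟪q,r⟫ ⟪r,p⟫ ⟪p,q⟫
    hPpos hQpos hRpos cs1 cs2 cs3 eXY eXZ eYZ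
  rw [Eqr] at hs
  rw [Erp] at ht
  rw [Epq] at hm
  have nrm : ∀ x y : EuclideanSpace ℝ (Fin 3), ‖x‖^2 = ‖y‖^2 → ‖x‖ = ‖y‖ := by
    intro x y hxy
    have := (sq_eq_sq_iff_abs_eq_abs ‖x‖ ‖y‖).mp hxy
    rwa [abs_of_nonneg (norm_nonneg _), abs_of_nonneg (norm_nonneg _)] at this
  refine ⟨?_, ?_, ?_⟩
  · have hbc : C - D = b - c := by rw [hb, hc]; abel
    rw [dist_eq_norm, dist_eq_norm, norm_sub_rev A B, ← ha, hbc]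
    apply nrm
    rw [← real_inner_self_eq_norm_sq, ← real_inner_self_eq_norm_sq]
    simp only [inner_sub_left, inner_sub_right]
    linarith [real_inner_comm c b, real_inner_comm b c]
  · have hac : B - D = a - c := by rw [ha, hc]; abel
    rw [dist_eq_norm, dist_eq_norm, norm_sub_rev A C, ← hb, hac]
    apply nrm
    rw [← real_inner_self_eq_norm_sq, ← real_inner_self_eq_norm_sq]
    simp only [inner_sub_left, inner_sub_right]
    linarith [real_inner_comm c a, real_inner_comm a c]
  · have hab : B - C = a - b := by rw [ha, hb]; abel
    rw [dist_eq_norm, dist_eq_norm, norm_sub_rev A D, ← hc, hab]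
    apply nrm
    rw [← real_inner_self_eq_norm_sq, ← real_inner_self_eq_norm_sq]
    simp only [inner_sub_left, inner_sub_right]
    linarith [real_inner_comm b a, real_inner_comm a b]

lemma exists_iso (A B C D A' B' C' D' : EuclideanSpace ℝ (Fin 3))
    (hind : AffineIndependent ℝ ![A, B, C, D])
    (hAB : dist A B = dist A' B') (hAC : dist A C = dist A' C')
    (hAD : dist A D = dist A' D') (hBC : dist B C = dist B' C')
    (hBD : dist B D = dist B' D') (hCD : dist C D = dist C' D') :
    ∃ f : EuclideanSpace ℝ (Fin 3) ≃ᵢ EuclideanSpace ℝ (Fin 3),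
      f A = A' ∧ f B = B' ∧ f C = C' ∧ f D = D' := by
  set v : Fin 3 → EuclideanSpace ℝ (Fin 3) := ![B - A, C - A, D - A] with hv
  set w : Fin 3 → EuclideanSpace ℝ (Fin 3) := ![B' - A', C' - A', D' - A'] with hw
  have li : LinearIndependent ℝ v := by
    rw [Fintype.linearIndependent_iff]
    intro g hg
    rw [Fin.sum_univ_three] at hg
    simp only [hv, Matrix.cons_val_zero, Matrix.cons_val_one, Matrix.head_cons,
      Matrix.cons_val_two, Matrix.tail_cons] at hg
    have hsum : ∑ i, (![-(g 0 + g 1 + g 2), g 0, g 1, g 2]) i = 0 := by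
      simp [Fin.sum_univ_four]; ring
    have hpt : ∑ i, (![-(g 0 + g 1 + g 2), g 0, g 1, g 2]) i • (![A, B, C, D]) i = 0 := by
      rw [Fin.sum_univ_four]
      simp only [Matrix.cons_val_zero, Matrix.cons_val_one, Matrix.head_cons,
        Matrix.cons_val_two, Matrix.tail_cons, Matrix.cons_val_three]
      have he : -(g 0 + g 1 + g 2) • A + g 0 • B + g 1 • C + g 2 • D
          = g 0 • (B - A) + g 1 • (C - A) + g 2 • (D - A) := by module
      rw [he, hg]
    have h0 := hind.eq_zero_of_sum_eq_zero hsum hpt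
    intro i
    fin_cases i
    · simpa using h0 1 (Finset.mem_univ _)
    · simpa using h0 2 (Finset.mem_univ _)
    · simpa using h0 3 (Finset.mem_univ _)
  have hcard : Fintype.card (Fin 3) = Module.finrank ℝ (EuclideanSpace ℝ (Fin 3)) := by
    simp [finrank_euclideanSpace]
  let bs : Module.Basis (Fin 3) ℝ (EuclideanSpace ℝ (Fin 3)) :=
    basisOfLinearIndependentOfCardEqFinrank li hcard
  have hbs : ∀ i, bs i = v i := fun i =>
    congrFun (coe_basisOfLinearIndependentOfCardEqFinrank li hcard) i
  let L : EuclideanSpace ℝ (Fin 3) →ₗ[ℝ] EuclideanSpace ℝ (Fin 3) := bs.constr ℝ w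
  have hL : ∀ i, L (v i) = w i := by
    intro i
    rw [← hbs i]
    exact bs.constr_basis ℝ w i
  -- inner products of the v's and w's agree
  have key0 : ∀ i j, ⟪w i, w j⟫ = ⟪v i, v j⟫ := by
    have pAB : ∀ (X Y Z X' Y' Z' : EuclideanSpace ℝ (Fin 3)),
        dist X Y = dist X' Y' → dist X Z = dist X' Z' → dist Y Z = dist Y' Z' →
        ⟪Y' - X', Z' - X'⟫ = ⟪Y - X, Z - X⟫ := by
      intro X Y Z X' Y' Z' u1 u2 u3
      rw [polar, polar, u1, u2, u3]
    intro i j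
    fin_cases i <;> fin_cases j <;>
      simp only [hv, hw, Matrix.cons_val_zero, Matrix.cons_val_one, Matrix.head_cons,
        Matrix.cons_val_two, Matrix.tail_cons] <;>
      [exact pAB A B B A' B' B' hAB hAB (by simp);
       exact pAB A B C A' B' C' hAB hAC hBC;
       exact pAB A B D A' B' D' hAB hAD hBD;
       exact pAB A C B A' C' B' hAC hAB (by rw [dist_comm C B, dist_comm C' B']; exact hBC);
       exact pAB A C C A' C' C' hAC hAC (by simp);
       exact pAB A C D A' C' D' hAC hAD hCD;
       exact pAB A D B A' D' B' hAD hAB (by rw [dist_comm D B, dist_comm D' B']; exact hBD);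
       exact pAB A D C A' D' C' hAD hAC (by rw [dist_comm D C, dist_comm D' C']; exact hCD);
       exact pAB A D D A' D' D' hAD hAD (by simp)]
  have key : ∀ i j, ⟪L (bs i), L (bs j)⟫ = ⟪bs i, bs j⟫ := by
    intro i j
    rw [hbs i, hbs j, hL i, hL j, key0]
  have hinner : ∀ x y, ⟪L x, L y⟫ = ⟪x, y⟫ := by
    intro x y
    rw [← bs.sum_repr x, ← bs.sum_repr y]
    rw [map_sum, map_sum]
    rw [sum_inner, sum_inner]
    congr 1
    ext i
    rw [inner_sum, inner_sum]
    congr 1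
    ext j
    rw [map_smul, map_smul]
    rw [real_inner_smul_left, real_inner_smul_left, real_inner_smul_right,
      real_inner_smul_right, key]
  let Li : EuclideanSpace ℝ (Fin 3) →ₗᵢ[ℝ] EuclideanSpace ℝ (Fin 3) :=
    L.isometryOfInner hinner
  let LIE : EuclideanSpace ℝ (Fin 3) ≃ₗᵢ[ℝ] EuclideanSpace ℝ (Fin 3) :=
    Li.toLinearIsometryEquiv rfl
  have hLIE : ∀ x, LIE x = L x := fun x => rfl
  let f : EuclideanSpace ℝ (Fin 3) ≃ᵢ EuclideanSpace ℝ (Fin 3) :=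
    ((IsometryEquiv.subRight A).trans LIE.toIsometryEquiv).trans
      (IsometryEquiv.addRight A')
  have hf : ∀ x, f x = L (x - A) + A' := fun x => rfl
  have hfA : f A = A' := by rw [hf]; simp
  have hfB : f B = B' := by
    rw [hf]
    have : L (B - A) = B' - A' := hL 0
    rw [this]; abel
  have hfC : f C = C' := by
    rw [hf]
    have : L (C - A) = C' - A' := hL 1
    rw [this]; abel
  have hfD : f D = D' := by
    rw [hf]
    have : L (D - A) = D' - A' := hL 2
    rw [this]; abel
  exact ⟨f, hfA, hfB, hfC, hfD⟩

lemma tc_refl (s : Set (EuclideanSpace ℝ (Fin 3))) : TriCongruent s s :=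
  ⟨IsometryEquiv.refl _, by
    rw [show ⇑(IsometryEquiv.refl (EuclideanSpace ℝ (Fin 3))) = id from rfl, Set.image_id]⟩

lemma tc_symm {s t : Set (EuclideanSpace ℝ (Fin 3))} (h : TriCongruent s t) :
    TriCongruent t s := by
  obtain ⟨f, hf⟩ := h
  refine ⟨f.symm, ?_⟩
  rw [← hf, ← Set.image_comp]
  simp

lemma tc_trans {s t u : Set (EuclideanSpace ℝ (Fin 3))} (h1 : TriCongruent s t)
    (h2 : TriCongruent t u) : TriCongruent s u := by
  obtain ⟨f, hf⟩ := h1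
  obtain ⟨g, hg⟩ := h2
  exact ⟨f.trans g, by rw [← hg, ← hf, ← Set.image_comp]; rfl⟩

theorem stmt_1 (A B C D : EuclideanSpace ℝ (Fin 3))
    (hind : AffineIndependent ℝ ![A, B, C, D])
    (h1 : triArea A B C = triArea A B D)
    (h2 : triArea A B C = triArea A C D)
    (h3 : triArea A B C = triArea B C D) :
    ∀ i j : Fin 4,
      TriCongruent
        (![({A, B, C} : Set (EuclideanSpace ℝ (Fin 3))), {A, B, D}, {A, C, D}, {B, C, D}] i)
        (![({A, B, C} : Set (EuclideanSpace ℝ (Fin 3))), {A, B, D}, {A, C, D}, {B, C, D}] j) := by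
  obtain ⟨d1, d2, d3⟩ := main_dist A B C D hind h1 h2 h3
  -- isometry realizing (A B)(C D)
  obtain ⟨f1, e1A, e1B, e1C, e1D⟩ := exists_iso A B C D B A D C hind
    (dist_comm A B) d2 d3 d3.symm d2.symm (dist_comm C D)
  -- isometry realizing (A C)(B D)
  obtain ⟨f2, e2A, e2B, e2C, e2D⟩ := exists_iso A B C D C D A B hind
    d1 (dist_comm A C) (d3.trans (dist_comm B C)) (d3.symm.trans (dist_comm A D))
    (dist_comm B D) d1.symm
  -- isometry realizing (A D)(B C)
  obtain ⟨f3, e3A, e3B, e3C, e3D⟩ := exists_iso A B C D D C B A hind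
    (d1.trans (dist_comm C D)) (d2.trans (dist_comm B D)) (dist_comm A D)
    (dist_comm B C) (d2.symm.trans (dist_comm A C)) (d1.symm.trans (dist_comm A B))
  have t1 : TriCongruent {A, B, C} {A, B, D} := by
    refine ⟨f1, ?_⟩
    rw [Set.image_insert_eq, Set.image_insert_eq, Set.image_singleton, e1A, e1B, e1C]
    ext x; simp only [Set.mem_insert_iff, Set.mem_singleton_iff]; tauto
  have t2 : TriCongruent {A, B, C} {A, C, D} := by
    refine ⟨f2, ?_⟩
    rw [Set.image_insert_eq, Set.image_insert_eq, Set.image_singleton, e2A, e2B, e2C]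
    ext x; simp only [Set.mem_insert_iff, Set.mem_singleton_iff]; tauto
  have t3 : TriCongruent {A, B, C} {B, C, D} := by
    refine ⟨f3, ?_⟩
    rw [Set.image_insert_eq, Set.image_insert_eq, Set.image_singleton, e3A, e3B, e3C]
    ext x; simp only [Set.mem_insert_iff, Set.mem_singleton_iff]; tauto
  intro i j
  fin_cases i <;> fin_cases j <;>
    simp only [Matrix.cons_val', Matrix.cons_val_zero, Matrix.cons_val_one, Matrix.head_cons,
      Matrix.cons_val_two, Matrix.tail_cons, Matrix.cons_val_three, Matrix.cons_val_fin_one,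
      Matrix.head_fin_const, Fin.mk_zero, Fin.mk_one] <;>
    first
      | exact tc_refl _
      | exact t1
      | exact t2
      | exact t3
      | exact tc_symm t1
      | exact tc_symm t2
      | exact tc_symm t3
      | exact tc_trans (tc_symm t1) t2
      | exact tc_trans (tc_symm t1) t3
      | exact tc_trans (tc_symm t2) t1
      | exact tc_trans (tc_symm t2) t3
      | exact tc_trans (tc_symm t3) t1
      | exact tc_trans (tc_symm t3) t2
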